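/- Every string generated with nonzero weight by the prefix grammar is a prefix of some string generated with nonzero weight by the original grammar: if G is a weighted CFG over ℝ≥0 and L_{Pre(G)}(x) > 0, then there exists y ∈ Σ* with L_G(xy) > 0. -/

import Mathlib

/-- A weighted context-free rule: `lhs → rhs` with weight `wt`. -/
structure Rule (V T W : Type) where
  lhs : V
  rhs : List (V ⊕ T)
  wt : W

/-- Derivation trees: a leaf is a terminal; an internal node records the rule applied. -/
inductive PTree (V T W : Type) where
  | leaf : T → PTree V T W
  | node : Rule V T W → List (PTree V T W) → PTree V T W

namespace PTree
variable {V T W : Type}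

/-- Root symbol of a derivation tree. -/
def root : PTree V T W → V ⊕ T
  | leaf t => .inr t
  | node r _ => .inl r.lhs

/-- Yield (the string of terminals at the leaves). -/
def yield : PTree V T W → List T
  | leaf t => [t]
  | node _ cs => (cs.attach.map fun c => yield c.1).flatten
decreasing_by
  have := List.sizeOf_lt_of_mem c.2
  simp only [PTree.node.sizeOf_spec]
  omega

/-- Weight of a derivation tree: the product of the weights of the rules used. -/
def wt [Monoid W] : PTree V T W → W
  | leaf _ => 1
  | node r cs => r.wt * (cs.attach.map fun c => wt c.1).prod
decreasing_by
  have := List.sizeOf_lt_of_mem c.2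
  simp only [PTree.node.sizeOf_spec]
  omega

/-- Height of a derivation tree (terminal leaves have height 0). -/
def height : PTree V T W → ℕ
  | leaf _ => 0
  | node _ cs => 1 + ((cs.attach.map fun c => height c.1).foldr max 0)
decreasing_by
  have := List.sizeOf_lt_of_mem c.2
  simp only [PTree.node.sizeOf_spec]
  omega

/-- Validity of a derivation tree with respect to a rule set. -/
inductive Valid (R : List (Rule V T W)) : PTree V T W → Prop where
  | leaf (t : T) : Valid R (.leaf t)
  | node {r : Rule V T W} {cs : List (PTree V T W)} :
      r ∈ R → cs.map root = r.rhs → (∀ c ∈ cs, Valid R c) → Valid R (.node r cs)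

end PTree

/-- A weighted context-free grammar. -/
structure WCFG (V T W : Type) where
  start : V
  rules : List (Rule V T W)

namespace WCFG
variable {V T : Type}

/-- Grammar size: sum over rules of (1 + arity). -/
def size {W : Type} (G : WCFG V T W) : ℕ :=
  (G.rules.map fun r => 1 + r.rhs.length).sum

/-- Weighted language of a symbol: total weight of derivation trees rooted at it with the
given yield. -/
noncomputable def symLang (G : WCFG V T ENNReal) (α : V ⊕ T) (x : List T) : ENNReal :=
  ∑' tr : {tr : PTree V T ENNReal //
      PTree.Valid G.rules tr ∧ tr.root = α ∧ tr.yield = x}, tr.1.wt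

/-- Weighted language of the grammar. -/
noncomputable def lang (G : WCFG V T ENNReal) (x : List T) : ENNReal :=
  G.symLang (.inl G.start) x

/-- Total weight of a symbol: the sum of the weights of all derivation trees rooted at it. -/
noncomputable def Z (G : WCFG V T ENNReal) (α : V ⊕ T) : ENNReal :=
  ∑' tr : {tr : PTree V T ENNReal // PTree.Valid G.rules tr ∧ tr.root = α}, tr.1.wt

end WCFG

section Prefix
variable {V T : Type}

/-- Embed a symbol of `G` into the symbol set of the prefix grammar (unprimed copy). -/
def liftSym : V ⊕ T → (Option (V ⊕ V)) ⊕ T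
  | .inl X => .inl (some (.inl X))
  | .inr t => .inr t

/-- The primed copy of a symbol: terminals are unchanged, nonterminals get primed. -/
def primeSym : V ⊕ T → (Option (V ⊕ V)) ⊕ T
  | .inl X => .inl (some (.inr X))
  | .inr t => .inr t

/-- The prefix grammar `Pre(G)`. Nonterminals are `Option (V ⊕ V)`: `none` is the new start
`S̄`, `some (.inl X)` is the original `X`, and `some (.inr X)` is the primed `X'`. -/
noncomputable def preG (G : WCFG V T ENNReal) : WCFG (Option (V ⊕ V)) T ENNReal where
  start := none
  rules :=
    (G.rules.map fun r => ⟨some (.inl r.lhs), r.rhs.map liftSym, r.wt⟩)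
    ++ [⟨none, [.inl (some (.inr G.start))], 1⟩,
        ⟨none, [], G.Z (.inl G.start)⟩]
    ++ G.rules.flatMap (fun r =>
        (List.finRange r.rhs.length).map (fun k =>
          ⟨some (.inr r.lhs),
           ((r.rhs.take (k : ℕ)).map liftSym) ++ [primeSym (r.rhs.get k)],
           r.wt * ((r.rhs.drop ((k : ℕ) + 1)).map (G.Z)).prod⟩))

end Prefix

section Helpers
open PTree

variable {V T : Type}

lemma yield_node {W : Type} (r : Rule V T W) (cs : List (PTree V T W)) :
    (PTree.node r cs).yield = (cs.map PTree.yield).flatten := by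
  rw [PTree.yield]; simp

lemma wt_node {W : Type} [Monoid W] (r : Rule V T W) (cs : List (PTree V T W)) :
    (PTree.node r cs).wt = r.wt * (cs.map PTree.wt).prod := by
  rw [PTree.wt]; simp

lemma liftSym_inj : Function.Injective (liftSym (V := V) (T := T)) := by
  intro a b h
  cases a <;> cases b <;> simp [liftSym] at h <;> simp [h]

lemma exists_forall₂ {α β : Type*} {P : α → β → Prop} :
    ∀ l : List α, (∀ a ∈ l, ∃ b, P a b) → ∃ m, List.Forall₂ P l m := by
  intro l
  induction l with
  | nil => exact fun _ => ⟨[], .nil⟩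
  | cons a t ih =>
    intro h
    obtain ⟨b, hb⟩ := h a (by simp)
    obtain ⟨m, hm⟩ := ih (fun x hx => h x (by simp [hx]))
    exact ⟨b :: m, .cons hb hm⟩

lemma map_eq_of_forall₂ {α β γ : Type*} {f : α → γ} {g : β → γ} {l : List α} {m : List β}
    (h : List.Forall₂ (fun a b => f a = g b) l m) : l.map f = m.map g := by
  induction h with
  | nil => rfl
  | cons h _ ih => simp [h, ih]

lemma mem_of_forall₂ {α β : Type*} {P : α → β → Prop} {l : List α} {m : List β}
    (h : List.Forall₂ P l m) : ∀ b ∈ m, ∃ a ∈ l, P a b := by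
  induction h with
  | nil => simp
  | cons hr ht ih =>
    intro b hb
    rcases List.mem_cons.mp hb with rfl | hb
    · exact ⟨_, by simp, hr⟩
    · obtain ⟨a, ha, hP⟩ := ih b hb
      exact ⟨a, by simp [ha], hP⟩

lemma exists_tree_of_Z_ne_zero (G : WCFG V T ENNReal) (α : V ⊕ T) (h : G.Z α ≠ 0) :
    ∃ tr : PTree V T ENNReal, PTree.Valid G.rules tr ∧ tr.root = α ∧ tr.wt ≠ 0 := by
  by_contra hc
  push_neg at hc
  exact h (ENNReal.tsum_eq_zero.mpr fun ⟨tr, hv, hr⟩ => hc tr hv hr)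

lemma rule_cases (G : WCFG V T ENNReal) {r : Rule (Option (V ⊕ V)) T ENNReal}
    (hr : r ∈ (preG G).rules) :
    (∃ r0 ∈ G.rules, r = ⟨some (.inl r0.lhs), r0.rhs.map liftSym, r0.wt⟩)
    ∨ r = ⟨none, [.inl (some (.inr G.start))], 1⟩
    ∨ r = ⟨none, [], G.Z (.inl G.start)⟩
    ∨ ∃ r0 ∈ G.rules, ∃ k : Fin r0.rhs.length,
        r = ⟨some (.inr r0.lhs), ((r0.rhs.take (k : ℕ)).map liftSym) ++ [primeSym (r0.rhs.get k)],
             r0.wt * ((r0.rhs.drop ((k : ℕ) + 1)).map G.Z).prod⟩ := by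
  simp only [preG, List.mem_append, List.mem_map, List.mem_flatMap, List.mem_cons,
    List.not_mem_nil, or_false, List.mem_finRange] at hr
  rcases hr with (⟨r0, h0, h1⟩ | (h | h)) | ⟨r0, h0, k, _, h1⟩
  · exact .inl ⟨r0, h0, h1.symm⟩
  · exact .inr (.inl h)
  · exact .inr (.inr (.inl h))
  · exact .inr (.inr (.inr ⟨r0, h0, k, h1.symm⟩))

end Helpers

section Key
open PTree

variable {V T : Type}

lemma key (G : WCFG V T ENNReal) (n : ℕ) :
    ∀ tr : PTree (Option (V ⊕ V)) T ENNReal, sizeOf tr = n →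
      PTree.Valid (preG G).rules tr → tr.wt ≠ 0 →
      (∀ α : V ⊕ T, tr.root = liftSym α →
        ∃ tr' : PTree V T ENNReal, PTree.Valid G.rules tr' ∧ tr'.root = α ∧
          tr'.yield = tr.yield ∧ tr'.wt ≠ 0) ∧
      (∀ α : V ⊕ T, tr.root = primeSym α →
        ∃ y : List T, ∃ tr' : PTree V T ENNReal, PTree.Valid G.rules tr' ∧ tr'.root = α ∧
          tr'.yield = tr.yield ++ y ∧ tr'.wt ≠ 0) := by
  induction n using Nat.strong_induction_on with
  | _ n ih =>
  intro tr hsz hv hw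
  cases tr with
  | leaf t =>
    constructor
    · intro α hα
      cases α with
      | inl X => simp [PTree.root, liftSym] at hα
      | inr t' =>
        simp only [PTree.root, liftSym, Sum.inr.injEq] at hα
        subst hα
        exact ⟨.leaf t, .leaf t, rfl, by rw [PTree.yield, PTree.yield], by rw [PTree.wt]; simp⟩
    · intro α hα
      cases α with
      | inl X => simp [PTree.root, primeSym] at hα
      | inr t' =>
        simp only [PTree.root, primeSym, Sum.inr.injEq] at hα
        subst hα
        exact ⟨[], .leaf t, .leaf t, rfl, by rw [PTree.yield, PTree.yield]; simp, by rw [PTree.wt]; simp⟩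
  | node r cs =>
    cases hv with
    | node hrmem hroots hcv =>
    rw [wt_node] at hw
    have hrw : r.wt ≠ 0 := fun h => hw (by rw [h, zero_mul])
    have hprod : (cs.map PTree.wt).prod ≠ 0 := fun h => hw (by rw [h, mul_zero])
    have hcw : ∀ c ∈ cs, PTree.wt c ≠ 0 := by
      intro c hc h
      exact hprod (List.prod_eq_zero_iff.mpr (by exact List.mem_map.mpr ⟨c, hc, h⟩))
    have hszc : ∀ c ∈ cs, sizeOf c < n := by
      intro c hc
      have h1 := List.sizeOf_lt_of_mem hc
      have h2 : sizeOf (PTree.node r cs) = n := hsz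
      simp only [PTree.node.sizeOf_spec] at h2
      omega
    -- IH applied to children
    have IH := fun c (hc : c ∈ cs) => ih (sizeOf c) (hszc c hc) c rfl (hcv c hc) (hcw c hc)
    constructor
    · -- lifted root
      intro α hα
      cases α with
      | inr t => simp [PTree.root, liftSym] at hα
      | inl X =>
      simp only [PTree.root, liftSym, Sum.inl.injEq] at hα
      rcases rule_cases G hrmem with ⟨r0, hr0, rfl⟩ | rfl | rfl | ⟨r0, hr0, k, rfl⟩
      · -- lifted rule
        simp only [Option.some.injEq, Sum.inl.injEq] at hα
        subst hα
        have hroots' : cs.map PTree.root = r0.rhs.map liftSym := hroots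
        have hex : ∀ c ∈ cs, ∃ c' : PTree V T ENNReal, PTree.Valid G.rules c' ∧
            liftSym c'.root = c.root ∧ c'.yield = c.yield ∧ c'.wt ≠ 0 := by
          intro c hc
          have : c.root ∈ r0.rhs.map liftSym := hroots' ▸ List.mem_map_of_mem (f := PTree.root) hc
          obtain ⟨β, _, hβ⟩ := List.mem_map.mp this
          obtain ⟨c', h1, h2, h3, h4⟩ := (IH c hc).1 β hβ.symm
          exact ⟨c', h1, by rw [h2, hβ], h3, h4⟩
        obtain ⟨cs', hf⟩ := exists_forall₂ cs hex
        have hroot' : cs'.map PTree.root = r0.rhs := by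
          have h1 : cs.map PTree.root = cs'.map (fun c' => liftSym c'.root) :=
            map_eq_of_forall₂ (hf.imp fun _ _ h => h.2.1.symm)
          have h2 : (cs'.map PTree.root).map liftSym = r0.rhs.map liftSym := by
            rw [List.map_map, ← hroots']
            exact h1.symm
          exact (List.map_injective_iff.mpr liftSym_inj) h2
        have hyield' : cs'.map PTree.yield = cs.map PTree.yield :=
          (map_eq_of_forall₂ (f := PTree.yield) (g := PTree.yield)
            (hf.imp fun _ _ h => h.2.2.1.symm)).symm
        have hval' : ∀ c' ∈ cs', PTree.Valid G.rules c' := by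
          intro c' hc'
          obtain ⟨c, _, hP⟩ := mem_of_forall₂ hf c' hc'
          exact hP.1
        have hwt' : ∀ c' ∈ cs', PTree.wt c' ≠ 0 := by
          intro c' hc'
          obtain ⟨c, _, hP⟩ := mem_of_forall₂ hf c' hc'
          exact hP.2.2.2
        refine ⟨.node r0 cs', .node hr0 hroot' hval', rfl, ?_, ?_⟩
        · rw [yield_node, yield_node, hyield']
        · rw [wt_node]
          simp only [ne_eq, mul_eq_zero, not_or]
          refine ⟨hrw, fun h => ?_⟩
          obtain ⟨c', hc', h0⟩ := List.mem_map.mp (List.prod_eq_zero_iff.mp h)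
          exact hwt' c' hc' h0
      · simp at hα
      · simp at hα
      · simp at hα
    · -- primed root
      intro α hα
      cases α with
      | inr t => simp [PTree.root, primeSym] at hα
      | inl X =>
      simp only [PTree.root, primeSym, Sum.inl.injEq] at hα
      rcases rule_cases G hrmem with ⟨r0, hr0, rfl⟩ | rfl | rfl | ⟨r0, hr0, k, rfl⟩
      · simp at hα
      · simp at hα
      · simp at hα
      simp only [Option.some.injEq, Sum.inr.injEq] at hα
      subst hα
      -- r.wt = r0.wt * prod of Z's
      simp only at hrw hroots
      have hr0w : r0.wt ≠ 0 := fun h => hrw (by rw [h, zero_mul])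
      have hZprod : ((r0.rhs.drop ((k : ℕ) + 1)).map G.Z).prod ≠ 0 := fun h => hrw (by rw [h, mul_zero])
      have hZ : ∀ b ∈ r0.rhs.drop ((k : ℕ) + 1), G.Z b ≠ 0 := by
        intro b hb h
        exact hZprod (List.prod_eq_zero_iff.mpr (List.mem_map.mpr ⟨b, hb, h⟩))
      -- split cs = cs₁ ++ [cl]
      rw [List.map_eq_append_iff] at hroots
      obtain ⟨cs₁, cs₂, rfl, hroots₁, hroots₂⟩ := hroots
      obtain ⟨cl, rfl, hcl⟩ : ∃ cl, cs₂ = [cl] ∧ cl.root = primeSym (r0.rhs.get k) := by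
        cases cs₂ with
        | nil => simp at hroots₂
        | cons a s =>
          simp only [List.map_cons, List.cons.injEq, List.map_eq_nil_iff] at hroots₂
          exact ⟨a, by simp [hroots₂.2], hroots₂.1⟩
      -- lifted children cs₁
      have hex : ∀ c ∈ cs₁, ∃ c' : PTree V T ENNReal, PTree.Valid G.rules c' ∧
          liftSym c'.root = c.root ∧ c'.yield = c.yield ∧ c'.wt ≠ 0 := by
        intro c hc
        have hc' : c ∈ cs₁ ++ [cl] := by simp [hc]
        have : c.root ∈ (r0.rhs.take (k : ℕ)).map liftSym := hroots₁ ▸ List.mem_map_of_mem (f := PTree.root) hc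
        obtain ⟨β, _, hβ⟩ := List.mem_map.mp this
        obtain ⟨c', h1, h2, h3, h4⟩ := (IH c hc').1 β hβ.symm
        exact ⟨c', h1, by rw [h2, hβ], h3, h4⟩
      obtain ⟨cs₁', hf⟩ := exists_forall₂ cs₁ hex
      have hroot₁ : cs₁'.map PTree.root = r0.rhs.take (k : ℕ) := by
        have h1 : cs₁.map PTree.root = cs₁'.map (fun c' => liftSym c'.root) :=
          map_eq_of_forall₂ (hf.imp fun _ _ h => h.2.1.symm)
        have h2 : (cs₁'.map PTree.root).map liftSym = (r0.rhs.take (k : ℕ)).map liftSym := by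
          rw [List.map_map, ← hroots₁]
          exact h1.symm
        exact (List.map_injective_iff.mpr liftSym_inj) h2
      have hyield₁ : cs₁'.map PTree.yield = cs₁.map PTree.yield :=
        (map_eq_of_forall₂ (f := PTree.yield) (g := PTree.yield)
          (hf.imp fun _ _ h => h.2.2.1.symm)).symm
      have hval₁ : ∀ c' ∈ cs₁', PTree.Valid G.rules c' := by
        intro c' hc'
        obtain ⟨c, _, hP⟩ := mem_of_forall₂ hf c' hc'
        exact hP.1
      have hwt₁ : ∀ c' ∈ cs₁', PTree.wt c' ≠ 0 := by
        intro c' hc'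
        obtain ⟨c, _, hP⟩ := mem_of_forall₂ hf c' hc'
        exact hP.2.2.2
      -- the primed child
      have hclmem : cl ∈ cs₁ ++ [cl] := by simp
      obtain ⟨y₁, cl', hv', hroot', hyield', hwt'⟩ := (IH cl hclmem).2 (r0.rhs.get k) hcl
      -- the dropped children from Z
      have hexd : ∀ b ∈ r0.rhs.drop ((k : ℕ) + 1), ∃ c : PTree V T ENNReal,
          PTree.Valid G.rules c ∧ c.root = b ∧ c.wt ≠ 0 :=
        fun b hb => exists_tree_of_Z_ne_zero G b (hZ b hb)
      obtain ⟨csd, hfd⟩ := exists_forall₂ _ hexd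
      have hrootd : csd.map PTree.root = r0.rhs.drop ((k : ℕ) + 1) := by
        have := map_eq_of_forall₂ (f := id) (g := PTree.root) (hfd.imp fun _ _ h => h.2.1.symm)
        simpa using this.symm
      have hvald : ∀ c ∈ csd, PTree.Valid G.rules c := by
        intro c hc
        obtain ⟨b, _, hP⟩ := mem_of_forall₂ hfd c hc
        exact hP.1
      have hwtd : ∀ c ∈ csd, PTree.wt c ≠ 0 := by
        intro c hc
        obtain ⟨b, _, hP⟩ := mem_of_forall₂ hfd c hc
        exact hP.2.2
      -- assemble
      have hrhs : r0.rhs = r0.rhs.take (k : ℕ) ++ r0.rhs.get k :: r0.rhs.drop ((k : ℕ) + 1) := by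
        conv_lhs => rw [← List.take_append_drop (k : ℕ) r0.rhs]
        rw [List.drop_eq_getElem_cons k.isLt]
        rfl
      refine ⟨y₁ ++ (csd.map PTree.yield).flatten, .node r0 (cs₁' ++ cl' :: csd), ?_, rfl, ?_, ?_⟩
      · refine .node hr0 ?_ ?_
        · rw [List.map_append, List.map_cons, hroot₁, hroot', hrootd, ← hrhs]
        · intro c hc
          rcases List.mem_append.mp hc with h | h
          · exact hval₁ c h
          · rcases List.mem_cons.mp h with rfl | h
            · exact hv'
            · exact hvald c h
      · rw [yield_node, yield_node]
        simp only [List.map_append, List.map_cons, List.flatten_append, List.flatten_cons,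
          hyield₁, hyield']
        simp [List.append_assoc]
      · rw [wt_node]
        simp only [ne_eq, mul_eq_zero, not_or]
        refine ⟨hr0w, fun h => ?_⟩
        obtain ⟨c', hc', h0⟩ := List.mem_map.mp (List.prod_eq_zero_iff.mp h)
        rcases List.mem_append.mp hc' with h | h
        · exact hwt₁ c' h h0
        · rcases List.mem_cons.mp h with rfl | h
          · exact hwt' h0
          · exact hwtd c' h h0

end Key

/-- Soundness of the prefix grammar: every string generated with
nonzero weight by `Pre(G)` is a prefix of some string generated with nonzero weight by
`G` (weights are nonnegative reals: all total weights are finite). -/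
theorem prefix_grammar_sound {V T : Type} (G : WCFG V T ENNReal)
    (hZ : ∀ α : V ⊕ T, G.Z α ≠ ⊤) (x : List T)
    (hx : 0 < (preG G).lang x) :
    ∃ y : List T, 0 < G.lang (x ++ y) := by
  clear hZ
  have hne : (preG G).lang x ≠ 0 := hx.ne'
  rw [WCFG.lang, WCFG.symLang] at hne
  have hex : ∃ i : {tr : PTree (Option (V ⊕ V)) T ENNReal //
      PTree.Valid (preG G).rules tr ∧ tr.root = .inl (preG G).start ∧ tr.yield = x},
      i.1.wt ≠ 0 := by
    by_contra h
    push_neg at h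
    exact hne (ENNReal.tsum_eq_zero.mpr h)
  obtain ⟨⟨tr, hv, hroot, hyield⟩, hw⟩ := hex
  cases tr with
  | leaf t => simp [PTree.root, preG] at hroot
  | node r cs =>
    cases hv with
    | node hrmem hroots hcv =>
    rw [wt_node] at hw
    have hprod : (cs.map PTree.wt).prod ≠ 0 := fun h => hw (by rw [h, mul_zero])
    have hlhs : r.lhs = none := by
      simpa [PTree.root, preG] using hroot
    rcases rule_cases G hrmem with ⟨r0, _, rfl⟩ | rfl | rfl | ⟨r0, _, k, rfl⟩
    · simp at hlhs
    · -- S̄ → S'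
      obtain ⟨c, rfl, hc⟩ : ∃ c, cs = [c] ∧ c.root = Sum.inl (some (Sum.inr G.start)) := by
        cases cs with
        | nil => simp at hroots
        | cons a s =>
          simp only [List.map_cons, List.cons.injEq, List.map_eq_nil_iff] at hroots
          exact ⟨a, by simp [hroots.2], hroots.1⟩
      have hcw : c.wt ≠ 0 := by
        intro h
        exact hprod (List.prod_eq_zero_iff.mpr (List.mem_map.mpr ⟨c, by simp, h⟩))
      obtain ⟨y, tr', hv', hroot', hyield', hwt'⟩ :=
        (key G (sizeOf c) c rfl (hcv c (by simp)) hcw).2 (.inl G.start)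
          (by simpa [primeSym] using hc)
      refine ⟨y, ?_⟩
      have hyx : c.yield = x := by
        rw [← hyield, yield_node]; simp
      rw [hyx] at hyield'
      rw [pos_iff_ne_zero, WCFG.lang, WCFG.symLang]
      intro h0
      exact hwt' (ENNReal.tsum_eq_zero.mp h0 ⟨tr', hv', hroot', hyield'⟩)
    · -- S̄ → ε
      have hcs : cs = [] := by simpa using hroots
      subst hcs
      have hxnil : x = [] := by rw [← hyield, yield_node]; simp
      have hZne : G.Z (.inl G.start) ≠ 0 := by
        intro h
        exact hw (by simp [h])
      obtain ⟨tr', hv', hroot', hwt'⟩ := exists_tree_of_Z_ne_zero G (.inl G.start) hZne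
      refine ⟨tr'.yield, ?_⟩
      rw [hxnil, List.nil_append, pos_iff_ne_zero, WCFG.lang, WCFG.symLang]
      intro h0
      exact hwt' (ENNReal.tsum_eq_zero.mp h0 ⟨tr', hv', hroot', rfl⟩)
    · simp at hlhs
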